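/- The minimization thresholds satisfy the exact balancing identity: for every real α > 0 and every integer j with 0 ≤ j ≤ k, Σ_{i=1}^j u_i + (k − j)·U + 2β = α·(k·(u_{j+1} − 2β) + 2β). -/
import Mathlib


open Finset

/-- DTPR-min threshold values `u_i`. -/
noncomputable def uMin (U β α : ℝ) (k : ℕ) (i : ℕ) : ℝ :=
  U * (1 - (1 - 1 / α) * (1 + 1 / ((k : ℝ) * α)) ^ (i - 1))
    + 2 * β * (1 / ((k : ℝ) * α) - 1 / (k : ℝ) + 1) * (1 + 1 / ((k : ℝ) * α)) ^ (i - 1)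

/-- The exact balancing identity for the minimization thresholds: for every
`α > 0` and every `0 ≤ j ≤ k`,
`Σ_{i=1}^j u_i + (k − j)·U + 2β = α·(k·(u_{j+1} − 2β) + 2β)`. -/
theorem dtpr_min_balancing_identity
    (U β : ℝ) (k : ℕ) (hk : 1 ≤ k)
    (α : ℝ) (hα : 0 < α)
    (j : ℕ) (hj : j ≤ k) :
    (∑ i ∈ Finset.Icc 1 j, uMin U β α k i) + ((k : ℝ) - (j : ℝ)) * U + 2 * β
      = α * ((k : ℝ) * (uMin U β α k (j + 1) - 2 * β) + 2 * β) := by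
  have hk0 : (k : ℝ) ≠ 0 := by positivity
  have hα0 : α ≠ 0 := ne_of_gt hα
  induction j with
  | zero =>
      simp only [Finset.Icc_self, uMin]
      norm_num
      field_simp
      ring
  | succ j ih =>
      have hj' : j ≤ k := Nat.le_of_succ_le hj
      have hsum : ∑ i ∈ Finset.Icc 1 (j + 1), uMin U β α k i
          = (∑ i ∈ Finset.Icc 1 j, uMin U β α k i) + uMin U β α k (j + 1) := by
        rw [Finset.sum_Icc_succ_top (Nat.le_add_left 1 j)]
      have key : α * ((k : ℝ) * (uMin U β α k (j + 1 + 1) - 2 * β) + 2 * β)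
          = α * ((k : ℝ) * (uMin U β α k (j + 1) - 2 * β) + 2 * β)
            + uMin U β α k (j + 1) - U := by
        simp only [uMin, Nat.add_sub_cancel]
        rw [pow_succ]
        field_simp
        ring
      rw [hsum, key, ← ih hj']
      push_cast
      ring
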